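/- arXiv:1711.04242 — 7 statements merged into one kernel-verified Lean document; each statement's English description precedes it below -/
import Mathlib

section
/- Let V be a subspace of ℝ^S for a finite set S, let B ⊆ S be a base of V, and for each e ∈ B let x_e be the standard representative vector of V with respect to B (so x_e(e) = 1 and x_e(e') = 0 for e' ∈ B, e' ≠ e). Then each x_e has minimal support in V. -/
/-- The support of a vector on `S`: the set of coordinates where it is nonzero. -/
def suppOf {S : Type*} (x : S → ℝ) : Set S := {e | x e ≠ 0}

/-- A nonzero vector `x` of a subspace `V` of `ℝ^S` has minimal support in `V`
if no nonzero vector of `V` has support properly contained in `suppOf x`. -/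
def HasMinimalSupport {S : Type*} (V : Submodule ℝ (S → ℝ)) (x : S → ℝ) : Prop :=
  x ≠ 0 ∧ ∀ y ∈ V, y ≠ 0 → ¬ (suppOf y ⊂ suppOf x)

/-- A subset `B ⊆ S` is a base of the subspace `V ⊆ ℝ^S` if the restriction map
`V → ℝ^B`, `x ↦ x|_B`, is a (linear) isomorphism, i.e. bijective. -/
def IsBase {S : Type*} (V : Submodule ℝ (S → ℝ)) (B : Set S) : Prop :=
  Function.Bijective (fun (x : V) => fun (e : B) => (x : S → ℝ) e)

/-- Each standard representative vector of `V` with respect to a base `B`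
(the vector `x_e ∈ V` with `x_e e = 1` and `x_e e' = 0` for `e' ∈ B`, `e' ≠ e`)
has minimal support in `V`. -/
theorem standardRepresentative_hasMinimalSupport
    {S : Type*} [Fintype S] (V : Submodule ℝ (S → ℝ)) (B : Set S) (hB : IsBase V B)
    (e : S) (he : e ∈ B) (xe : S → ℝ) (hxV : xe ∈ V) (hxe : xe e = 1)
    (hx0 : ∀ e' ∈ B, e' ≠ e → xe e' = 0) :
    HasMinimalSupport V xe := by
  constructor
  · intro h
    have : xe e = 0 := by rw [h]; rfl
    rw [hxe] at this; norm_num at this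
  · intro y hyV hy0 hss
    -- injectivity of restriction
    have hinj := hB.injective
    -- y restricted to B is nonzero
    have hyB : ∃ e' ∈ B, y e' ≠ 0 := by
      by_contra hc
      push_neg at hc
      apply hy0
      have : (⟨y, hyV⟩ : V) = (⟨0, V.zero_mem⟩ : V) := by
        apply hinj
        funext e'
        simp [hc e' e'.2]
      exact congrArg Subtype.val this
    obtain ⟨e', he'B, hy'⟩ := hyB
    have hsub := hss.1
    have he'e : e' = e := by
      by_contra hne
      have : e' ∈ suppOf xe := hsub hy'
      exact this (hx0 e' he'B hne)
    subst he'e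
    -- z = (y e) • xe - y vanishes on B, hence is 0
    set c := y e' with hc
    have hz : (c • xe - y) ∈ V := V.sub_mem (V.smul_mem c hxV) hyV
    have hzB : ∀ b ∈ B, (c • xe - y) b = 0 := by
      intro b hb
      by_cases hbe : b = e'
      · subst hbe; simp [hxe, hc]
      · have hx : xe b = 0 := hx0 b hb hbe
        have hyb : y b = 0 := by
          by_contra hyb
          exact (hsub hyb) hx
        simp [hx, hyb]
    have hz0 : c • xe - y = 0 := by
      have : (⟨c • xe - y, hz⟩ : V) = (⟨0, V.zero_mem⟩ : V) := by
        apply hinj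
        funext b
        simp [hzB b b.2]
      exact congrArg Subtype.val this
    have hy : y = c • xe := by
      have := sub_eq_zero.mp hz0
      exact this.symm
    -- then supports are equal, contradicting proper subset
    have hcne : c ≠ 0 := hy'
    obtain ⟨a, haxe, hay⟩ := Set.exists_of_ssubset hss
    apply hay
    rw [hy]
    simp only [suppOf, Set.mem_setOf_eq, Pi.smul_apply, smul_eq_mul]
    exact mul_ne_zero hcne haxe
end

section
/- Let V be a subspace of ℝ^S for a finite set S. Then V is spanned by its vectors of minimal support; consequently, any vector of ℝ^S orthogonal to all minimal support vectors of V is orthogonal to every vector of V. -/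
lemma mem_span_minSupp {S : Type*} [Fintype S] (V : Submodule ℝ (S → ℝ)) :
    ∀ n (v : S → ℝ), v ∈ V → (suppOf v).ncard ≤ n →
      v ∈ Submodule.span ℝ {x : S → ℝ | x ∈ V ∧ HasMinimalSupport V x} := by
  intro n
  induction n with
  | zero =>
    intro v hv hcard
    have hfin : (suppOf v).Finite := Set.toFinite _
    have h0 : (suppOf v).ncard = 0 := Nat.le_zero.mp hcard
    have : suppOf v = ∅ := (Set.ncard_eq_zero hfin).mp h0
    have hv0 : v = 0 := by
      funext e
      by_contra he
      exact absurd (this ▸ (he : v e ≠ 0) : e ∈ (∅ : Set S)) (Set.notMem_empty e)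
    rw [hv0]; exact Submodule.zero_mem _
  | succ n ih =>
    intro v hv hcard
    by_cases hv0 : v = 0
    · rw [hv0]; exact Submodule.zero_mem _
    by_cases hmin : HasMinimalSupport V v
    · exact Submodule.subset_span ⟨hv, hmin⟩
    · unfold HasMinimalSupport at hmin
      push_neg at hmin
      obtain ⟨y, hyV, hy0, hyss⟩ := hmin hv0
      have hylt : (suppOf y).ncard < (suppOf v).ncard :=
        Set.ncard_lt_ncard hyss (Set.toFinite _)
      have hyle : (suppOf y).ncard ≤ n := by omega
      have hyspan := ih y hyV hyle
      obtain ⟨e, he⟩ : ∃ e, y e ≠ 0 := by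
        by_contra h
        push_neg at h
        exact hy0 (funext fun e => h e)
      set c : ℝ := v e / y e with hc
      set w : S → ℝ := v - c • y with hw
      have hwV : w ∈ V := Submodule.sub_mem _ hv (Submodule.smul_mem _ _ hyV)
      have hwsub : suppOf w ⊆ suppOf v := by
        intro f hf
        by_contra hfv
        have hvf : v f = 0 := not_not.mp hfv
        have hyf : y f = 0 := by
          by_contra hyf
          exact hfv (hyss.1 hyf)
        apply hf
        simp [hw, hvf, hyf]
      have hwe : w e = 0 := by
        simp [hw, hc]
        field_simp
        ring
      have hwss : suppOf w ⊂ suppOf v := by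
        refine ⟨hwsub, fun hsub => ?_⟩
        have : v e ≠ 0 := hyss.1 he
        exact (hsub this) hwe
      have hwlt : (suppOf w).ncard < (suppOf v).ncard :=
        Set.ncard_lt_ncard hwss (Set.toFinite _)
      have hwspan := ih w hwV (by omega)
      have : v = w + c • y := by simp [hw]
      rw [this]
      exact Submodule.add_mem _ hwspan (Submodule.smul_mem _ _ hyspan)

/-- A subspace `V` of `ℝ^S` is spanned by its vectors of minimal support;
consequently, any vector orthogonal (under the dot product) to all minimal
support vectors of `V` is orthogonal to every vector of `V`. -/
theorem span_minimalSupport_eq_and_orthogonality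
    {S : Type*} [Fintype S] (V : Submodule ℝ (S → ℝ)) :
    Submodule.span ℝ {x : S → ℝ | x ∈ V ∧ HasMinimalSupport V x} = V ∧
    ∀ y : S → ℝ, (∀ x : S → ℝ, x ∈ V → HasMinimalSupport V x → ∑ e, x e * y e = 0) →
      ∀ v ∈ V, ∑ e, v e * y e = 0 := by
  have hspan : Submodule.span ℝ {x : S → ℝ | x ∈ V ∧ HasMinimalSupport V x} = V := by
    apply le_antisymm
    · rw [Submodule.span_le]
      intro x hx
      exact hx.1
    · intro v hv
      exact mem_span_minSupp V (suppOf v).ncard v hv le_rfl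
  refine ⟨hspan, fun y hy v hv => ?_⟩
  rw [← hspan] at hv
  induction hv using Submodule.span_induction with
  | mem x hx => exact hy x hx.1 hx.2
  | zero => simp
  | add x z _ _ hx hz =>
    simp only [Pi.add_apply, add_mul, Finset.sum_add_distrib, hx, hz, add_zero]
  | smul c x _ hx =>
    simp only [Pi.smul_apply, smul_eq_mul, mul_assoc, ← Finset.mul_sum, hx, mul_zero]
end

section
/- Let V be a regular (completely unimodular) subspace of ℝ^S for a finite set S, let B ⊆ S be a base of V, and let (x_e)_{e∈B} be the standard representative vectors of V with respect to B. Then every x_e takes values only in {0, 1, −1}. -/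
/-- A subspace `V` of `ℝ^S` is regular (completely unimodular) if every minimal
support vector of `V` is a scalar multiple of a vector with values in `{0, 1, -1}`. -/
def IsRegularSubspace {S : Type*} (V : Submodule ℝ (S → ℝ)) : Prop :=
  ∀ x ∈ V, HasMinimalSupport V x →
    ∃ (c : ℝ) (u : S → ℝ), (∀ e, u e = 0 ∨ u e = 1 ∨ u e = -1) ∧ x = c • u

/-- If `V` is regular, then every standard representative vector of `V` with
respect to a base `B` takes values only in `{0, 1, -1}`. -/
theorem standardRepresentative_values_of_regular
    {S : Type*} [Fintype S] (V : Submodule ℝ (S → ℝ)) (hV : IsRegularSubspace V)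
    (B : Set S) (hB : IsBase V B)
    (e : S) (he : e ∈ B) (xe : S → ℝ) (hxV : xe ∈ V) (hxe : xe e = 1)
    (hx0 : ∀ e' ∈ B, e' ≠ e → xe e' = 0) :
    ∀ e' : S, xe e' = 0 ∨ xe e' = 1 ∨ xe e' = -1 := by
  
  have hmin : HasMinimalSupport V xe := by
    constructor
    · intro h; rw [h] at hxe; simp at hxe
    · intro y hyV hy0 hsub
      have hyB : ∀ e' ∈ B, e' ≠ e → y e' = 0 := by
        intro e' hE' hne
        by_contra h
        have h1 : e' ∈ suppOf xe := hsub.1 h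
        exact h1 (hx0 e' hE' hne)
      have key : (⟨y, hyV⟩ : V) = (y e) • (⟨xe, hxV⟩ : V) := by
        apply hB.injective
        funext b
        obtain ⟨b, hbB⟩ := b
        by_cases hbe : b = e
        · subst hbe
          simp [hxe]
        · simp [hyB b hbB hbe, hx0 b hbB hbe]
      have hy : y = (y e) • xe := congrArg Subtype.val key
      by_cases hye : y e = 0
      · apply hy0; rw [hy, hye, zero_smul]
      · have hss : suppOf y = suppOf xe := by
          ext s
          simp only [suppOf, Set.mem_setOf_eq]
          rw [hy]
          simp [smul_eq_mul, mul_ne_zero_iff, hye]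
        exact hsub.2 (hss ▸ Set.Subset.refl (suppOf y))
  obtain ⟨c, u, hu, hcu⟩ := hV xe hxV hmin
  have he1 : c * u e = 1 := by rw [hcu] at hxe; simpa using hxe
  have hc : c = 1 ∧ u e = 1 ∨ c = -1 ∧ u e = -1 := by
    rcases hu e with h | h | h <;> rw [h] at he1 <;> [skip; left; right] <;>
      simp_all <;> linarith
  intro e'
  have : xe e' = c * u e' := by rw [hcu]; simp
  rcases hc with ⟨hc1, _⟩ | ⟨hc1, _⟩ <;> rcases hu e' with h | h | h <;>
    rw [this, hc1, h] <;> norm_num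
end

section
/- Let V be a regular (completely unimodular) subspace of ℝ^S for a finite set S, let B ⊆ S be a base of V, and let Q_B be the standard representative matrix of V with respect to B, i.e. the matrix whose rows are the standard representative vectors (x_e)_{e∈B} and whose columns are indexed by S. Then Q_B is totally unimodular: every square submatrix of Q_B has determinant 0, 1, or −1. -/
open Matrix

section Aux

variable {S : Type*} [Fintype S] {V : Submodule ℝ (S → ℝ)}

/-- Any standard representative matrix of a regular subspace has entries in `{0, 1, -1}`. -/
lemma aux_entries (hV : IsRegularSubspace V) {B : Set S} (hB : IsBase V B)
    (Q : Matrix B S ℝ) (hQV : ∀ e : B, Q e ∈ V)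
    (hQdiag : ∀ e : B, Q e (e : S) = 1)
    (hQoff : ∀ e e' : B, e' ≠ e → Q e (e' : S) = 0) :
    ∀ (e : B) (s : S), Q e s = 0 ∨ Q e s = 1 ∨ Q e s = -1 := by
  intro e s
  have hmin : HasMinimalSupport V (Q e) := by
    constructor
    · intro h0
      have := hQdiag e
      rw [h0] at this
      simp at this
    · intro y hy hy0 hss
      have hsub := hss.subset
      have hyB : ∀ e' : B, e' ≠ e → y (e' : S) = 0 := by
        intro e' hne
        by_contra hcon
        exact (hsub hcon) (hQoff e e' hne)
      by_cases hye : y (e : S) = 0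
      · apply hy0
        have heq : (⟨y, hy⟩ : V) = (0 : V) := by
          apply hB.injective
          funext e''
          show y (e'' : S) = ((0 : V) : S → ℝ) (e'' : S)
          by_cases he'' : e'' = e
          · subst he''; simpa using hye
          · simpa using hyB e'' he''
        simpa using congrArg (fun z : V => (z : S → ℝ)) heq
      · -- Q e = (y e)⁻¹ • y
        have hz : Q e - (y (e : S))⁻¹ • y ∈ V :=
          Submodule.sub_mem _ (hQV e) (Submodule.smul_mem _ _ hy)
        have hz0 : (⟨_, hz⟩ : V) = (0 : V) := by
          apply hB.injective
          funext e''
          show (Q e - (y (e : S))⁻¹ • y) (e'' : S) = ((0 : V) : S → ℝ) (e'' : S)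
          by_cases he'' : e'' = e
          · subst he''
            simp [hQdiag, inv_mul_cancel₀ hye]
          · simp [hQoff e e'' he'', hyB e'' he'']
        have hQy : Q e = (y (e : S))⁻¹ • y := by
          have h' : Q e - (y (e : S))⁻¹ • y = (0 : S → ℝ) := by
            have := congrArg (fun z : V => (z : S → ℝ)) hz0
            simpa using this
          exact sub_eq_zero.mp h'
        apply hss.not_subset
        rw [hQy]
        intro t ht
        simp only [suppOf, Set.mem_setOf_eq, Pi.smul_apply, smul_eq_mul] at ht ⊢
        exact fun h0 => ht (by rw [h0, mul_zero])
  obtain ⟨c, u, hu, hcu⟩ := hV (Q e) (hQV e) hmin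
  have h1 : c * u (e : S) = 1 := by
    have := hQdiag e
    rw [hcu] at this
    simpa using this
  have hc : c = 1 ∨ c = -1 := by
    rcases hu (e : S) with h | h | h
    · rw [h, mul_zero] at h1; exact absurd h1 (by norm_num)
    · left; rw [h, mul_one] at h1; exact h1
    · right; rw [h] at h1; linarith
  have hs : Q e s = c * u s := by rw [hcu]; simp
  rcases hu s with h | h | h <;> rcases hc with hc | hc <;>
    simp [hs, h, hc]

/-- Expansion of a vector of `V` in the rows of a standard representative matrix. -/
lemma aux_expand {B : Set S} [Fintype B] (hB : IsBase V B)
    (Q : Matrix B S ℝ) (hQV : ∀ e : B, Q e ∈ V)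
    (hQdiag : ∀ e : B, Q e (e : S) = 1)
    (hQoff : ∀ e e' : B, e' ≠ e → Q e (e' : S) = 0)
    {x : S → ℝ} (hx : x ∈ V) :
    x = ∑ b : B, x (b : S) • Q b := by
  classical
  have hy : (∑ b : B, x (b : S) • Q b) ∈ V :=
    Submodule.sum_mem _ fun b _ => Submodule.smul_mem _ _ (hQV b)
  have heq : (⟨x, hx⟩ : V) = (⟨_, hy⟩ : V) := by
    apply hB.injective
    funext e
    show x (e : S) = (∑ b : B, x (b : S) • Q b) (e : S)
    rw [Finset.sum_apply]
    rw [Finset.sum_eq_single e]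
    · simp [hQdiag e]
    · intro b _ hbe
      simp [hQoff b e fun h => hbe h.symm]
    · intro h; exact absurd (Finset.mem_univ e) h
  exact congrArg (fun z : V => (z : S → ℝ)) heq

/-- Every base admits a standard representative matrix. -/
lemma aux_exists_Q {B : Set S} (hB : IsBase V B) :
    ∃ Q : Matrix B S ℝ, (∀ e : B, Q e ∈ V) ∧ (∀ e : B, Q e (e : S) = 1) ∧
      (∀ e e' : B, e' ≠ e → Q e (e' : S) = 0) := by
  classical
  choose x hx using fun e : B => hB.surjective (Pi.single e 1)
  refine ⟨fun e => (x e : S → ℝ), fun e => (x e).2, ?_, ?_⟩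
  · intro e
    have := congrFun (hx e) e
    simpa using this
  · intro e e' hne
    have := congrFun (hx e) e'
    simpa [Pi.single_eq_of_ne hne] using this

/-- A real matrix with entries in `{0, 1, -1}` has an integer determinant. -/
lemma aux_int_det {n : Type*} [Fintype n] [DecidableEq n] (M : Matrix n n ℝ)
    (h : ∀ i j, M i j = 0 ∨ M i j = 1 ∨ M i j = -1) :
    ∃ z : ℤ, M.det = (z : ℝ) := by
  classical
  set M₀ : Matrix n n ℤ := Matrix.of fun i j =>
    if M i j = 1 then 1 else if M i j = -1 then -1 else 0 with hM₀
  have hmap : M = M₀.map (Int.castRingHom ℝ) := by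
    ext i j
    rcases h i j with h' | h' | h' <;> simp [hM₀, h'] <;> norm_num
  exact ⟨M₀.det, by rw [hmap, ← RingHom.mapMatrix_apply, ← RingHom.map_det]; simp⟩

end Aux

/-- If `V` is regular, then the standard representative matrix `Q_B` of `V` with
respect to a base `B` (rows indexed by `B`, columns by `S`, the row of `e ∈ B`
being the standard representative vector `x_e`) is totally unimodular: every
square submatrix has determinant `0`, `1` or `-1`. -/
theorem standardRepresentativeMatrix_totallyUnimodular_of_regular
    {S : Type*} [Fintype S] (V : Submodule ℝ (S → ℝ)) (hV : IsRegularSubspace V)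
    (B : Set S) (hB : IsBase V B) (Q : Matrix B S ℝ)
    (hQV : ∀ e : B, Q e ∈ V)
    (hQdiag : ∀ e : B, Q e (e : S) = 1)
    (hQoff : ∀ e e' : B, e' ≠ e → Q e (e' : S) = 0) :
    Q.IsTotallyUnimodular := by
  classical
  intro k f g hf hg
  haveI : Fintype B := Fintype.ofFinite _
  by_cases hdeg : ∃ (i : Fin k) (b : B), (b : S) = g i ∧ ∀ j, f j ≠ b
  · obtain ⟨i, b, hbg, hbf⟩ := hdeg
    refine ⟨0, ?_⟩
    rw [SignType.coe_zero, eq_comm]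
    apply Matrix.det_eq_zero_of_column_eq_zero i
    intro j
    simp only [Matrix.submatrix_apply]
    rw [← hbg]
    exact hQoff (f j) b fun h => hbf j h.symm
  · push_neg at hdeg
    -- the column replacement map
    set φ : B → S := fun b => if h : ∃ i, f i = b then g h.choose else (b : S) with hφ
    have hφf : ∀ i, φ (f i) = g i := by
      intro i
      have h : ∃ j, f j = f i := ⟨i, rfl⟩
      have : f h.choose = f i := h.choose_spec
      simp only [hφ, dif_pos h]
      rw [hf this]
    have hφn : ∀ b : B, (∀ i, f i ≠ b) → φ b = (b : S) := by
      intro b hb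
      simp only [hφ, dif_neg (fun h : ∃ i, f i = b => hb h.choose h.choose_spec)]
    have hφinj : Function.Injective φ := by
      intro b₁ b₂ hbb
      by_cases h1 : ∃ i, f i = b₁ <;> by_cases h2 : ∃ i, f i = b₂
      · obtain ⟨i₁, hi₁⟩ := h1; obtain ⟨i₂, hi₂⟩ := h2
        rw [← hi₁, ← hi₂, hφf, hφf] at hbb
        rw [← hi₁, ← hi₂, hg hbb]
      · push_neg at h2
        rw [hφn b₂ h2] at hbb
        obtain ⟨i₁, hi₁⟩ := h1
        rw [← hi₁, hφf] at hbb
        exact absurd (hdeg i₁ b₂ hbb.symm) (by push_neg; exact h2)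
      · push_neg at h1
        rw [hφn b₁ h1] at hbb
        obtain ⟨i₂, hi₂⟩ := h2
        rw [← hi₂, hφf] at hbb
        exact absurd (hdeg i₂ b₁ hbb) (by push_neg; exact h1)
      · push_neg at h1; push_neg at h2
        rw [hφn b₁ h1, hφn b₂ h2] at hbb
        exact Subtype.ext hbb
    set M : Matrix B B ℝ := Matrix.of (fun b b' => Q b (φ b')) with hM
    -- the submatrix determinant equals det M
    set eq1 : (Fin k ⊕ ((Set.range f)ᶜ : Set B)) ≃ B :=
      (Equiv.sumCongr (Equiv.ofInjective f hf) (Equiv.refl _)).trans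
        (Equiv.Set.sumCompl (Set.range f)) with heq1def
    have heq1l : ∀ i, eq1 (Sum.inl i) = f i := by
      intro i
      simp [heq1def, Equiv.Set.sumCompl_apply_inl]
    have heq1r : ∀ c : ((Set.range f)ᶜ : Set B), eq1 (Sum.inr c) = (c : B) := by
      intro c
      simp [heq1def, Equiv.Set.sumCompl_apply_inr]
    have hblocks : M.submatrix eq1 eq1 =
        Matrix.fromBlocks (Q.submatrix f g) 0
          (Matrix.of fun (c : ((Set.range f)ᶜ : Set B)) j => Q (c : B) (g j)) 1 := by
      ext r s
      cases r with
      | inl i =>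
        cases s with
        | inl j =>
          simp [Matrix.submatrix_apply, heq1l, hM, hφf]
        | inr cs =>
          have hcnr : ∀ i', f i' ≠ (cs : B) := fun i' hc => cs.2 ⟨i', hc⟩
          simp only [Matrix.submatrix_apply, heq1l, heq1r, hM, Matrix.of_apply,
            Matrix.fromBlocks_apply₁₂, Matrix.zero_apply]
          rw [hφn _ hcnr]
          exact hQoff (f i) (cs : B) fun h => hcnr i h.symm
      | inr cr =>
        cases s with
        | inl j =>
          simp [Matrix.submatrix_apply, heq1r, heq1l, hM, hφf]
        | inr cs =>
          have hcnr : ∀ i', f i' ≠ (cs : B) := fun i' hc => cs.2 ⟨i', hc⟩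
          simp only [Matrix.submatrix_apply, heq1r, hM, Matrix.of_apply,
            Matrix.fromBlocks_apply₂₂]
          rw [hφn _ hcnr]
          by_cases hcc : cr = cs
          · subst hcc
            simp [hQdiag, Matrix.one_apply]
          · rw [Matrix.one_apply_ne hcc]
            exact hQoff (cr : B) (cs : B) fun h => hcc (Subtype.ext h.symm)
    have hMdet : (Q.submatrix f g).det = M.det := by
      rw [← Matrix.det_submatrix_equiv_self eq1 M, hblocks,
        Matrix.det_fromBlocks_zero₁₂, Matrix.det_one, mul_one]
    by_cases hM0 : M.det = 0
    · exact ⟨0, by rw [SignType.coe_zero, hMdet, hM0]⟩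
    -- M is invertible; build the new base B'
    have hMunit : IsUnit M := (Matrix.isUnit_iff_isUnit_det M).2 (isUnit_iff_ne_zero.2 hM0)
    set B' : Set S := Set.range φ with hB'def
    haveI : Fintype B' := Fintype.ofFinite _
    set ψ : B ≃ B' := Equiv.ofInjective φ hφinj with hψ
    have hψcoe : ∀ b : B, ((ψ b : B') : S) = φ b := fun b => rfl
    -- every x ∈ V satisfies x (φ b) = (Mᵀ.mulVec x|_B) b
    have hkey : ∀ x ∈ V, ∀ b : B,
        x (φ b) = Mᵀ.mulVec (fun b'' : B => x (b'' : S)) b := by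
      intro x hx b
      have hexp := aux_expand hB Q hQV hQdiag hQoff hx
      conv_lhs => rw [hexp]
      rw [Finset.sum_apply]
      simp only [Pi.smul_apply, smul_eq_mul]
      rw [Matrix.mulVec, dotProduct]
      apply Finset.sum_congr rfl
      intro b'' _
      simp [hM, Matrix.transpose_apply, mul_comm]
    have hB' : IsBase V B' := by
      have hmulbij : Function.Bijective (Mᵀ.mulVec : (B → ℝ) → (B → ℝ)) := by
        have hMT : IsUnit Mᵀ := (Matrix.isUnit_iff_isUnit_det Mᵀ).2
          (by rw [Matrix.det_transpose]; exact isUnit_iff_ne_zero.2 hM0)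
        have h1 : Mᵀ * Mᵀ⁻¹ = 1 := Matrix.mul_nonsing_inv _ ((Matrix.isUnit_iff_isUnit_det Mᵀ).1 hMT)
        have h2 : Mᵀ⁻¹ * Mᵀ = 1 := Matrix.nonsing_inv_mul _ ((Matrix.isUnit_iff_isUnit_det Mᵀ).1 hMT)
        constructor
        · intro v w hvw
          have := congrArg (Mᵀ⁻¹.mulVec) hvw
          rwa [Matrix.mulVec_mulVec, Matrix.mulVec_mulVec, h2, Matrix.one_mulVec,
            Matrix.one_mulVec] at this
        · intro v
          exact ⟨Mᵀ⁻¹.mulVec v, by rw [Matrix.mulVec_mulVec, h1, Matrix.one_mulVec]⟩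
      have hcomp : (fun (x : V) => fun (e : B') => (x : S → ℝ) (e : S)) =
          (fun w : B → ℝ => fun e : B' => Mᵀ.mulVec w (ψ.symm e)) ∘
            (fun (x : V) => fun (e : B) => (x : S → ℝ) (e : S)) := by
        funext x
        funext e
        show (x : S → ℝ) (e : S) = Mᵀ.mulVec (fun b : B => (x : S → ℝ) (b : S)) (ψ.symm e)
        rw [← hkey (x : S → ℝ) x.2 (ψ.symm e)]
        congr 1
        have : ((ψ (ψ.symm e) : B') : S) = φ (ψ.symm e) := hψcoe _
        rw [← this, ψ.apply_symm_apply]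
      rw [IsBase, hcomp]
      apply Function.Bijective.comp _ hB
      constructor
      · intro v w hvw
        apply hmulbij.injective
        funext b
        have := congrFun hvw (ψ b)
        simpa using this
      · intro v
        obtain ⟨w, hw⟩ := hmulbij.surjective (fun b : B => v (ψ b))
        refine ⟨w, ?_⟩
        funext e
        have h'' := congrFun hw (ψ.symm e)
        show (Mᵀ.mulVec w) (ψ.symm e) = v e
        rw [h'', ψ.apply_symm_apply]
    obtain ⟨Q', hQ'V, hQ'diag, hQ'off⟩ := aux_exists_Q hB'
    -- entries of Q and Q' are in {0,1,-1}
    have hQ01 := aux_entries hV hB Q hQV hQdiag hQoff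
    have hQ'01 := aux_entries hV hB' Q' hQ'V hQ'diag hQ'off
    set N : Matrix B B ℝ := Matrix.of (fun b b₂ => Q' (ψ b) (b₂ : S)) with hN
    have hMN : M * N = 1 := by
      ext b b₂
      rw [Matrix.mul_apply]
      have hexp := aux_expand hB' Q' hQ'V hQ'diag hQ'off (hQV b)
      have heval := congrFun hexp (b₂ : S)
      rw [Finset.sum_apply] at heval
      rw [← Equiv.sum_comp ψ (fun e' : B' => (Q b (e' : S) • Q' e') (b₂ : S))] at heval
      simp only [Pi.smul_apply, smul_eq_mul] at heval
      have hsum : ∑ j : B, M b j * N j b₂ =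
          ∑ j : B, Q b ((ψ j : B') : S) * Q' (ψ j) (b₂ : S) := by
        apply Finset.sum_congr rfl
        intro j _
        rw [hψcoe]
        rfl
      rw [hsum, ← heval]
      by_cases hbb : b = b₂
      · subst hbb; rw [hQdiag, Matrix.one_apply_eq]
      · rw [hQoff b b₂ fun h => hbb h.symm, Matrix.one_apply_ne hbb]
    -- integrality
    obtain ⟨zM, hzM⟩ := aux_int_det M (fun i j => hQ01 i (φ j))
    obtain ⟨zN, hzN⟩ := aux_int_det N (fun i j => hQ'01 (ψ i) (j : S))
    have hdet1 : M.det * N.det = 1 := by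
      rw [← Matrix.det_mul, hMN, Matrix.det_one]
    rw [hzM, hzN] at hdet1
    have hz : zM * zN = 1 := by exact_mod_cast hdet1
    have hzM1 : zM = 1 ∨ zM = -1 := Int.isUnit_iff.mp (IsUnit.of_mul_eq_one _ hz)
    rcases hzM1 with h | h
    · exact ⟨1, by rw [hMdet, hzM, h]; simp⟩
    · exact ⟨-1, by rw [hMdet, hzM, h]; simp⟩
end

section
/- Let V be a regular (completely unimodular) subspace of ℝ^S for a finite set S. Then the orthogonal complement V^⊥ (with respect to the dot product on ℝ^S) is also regular. -/
/-- The orthogonal complement of a subspace `V` of `ℝ^S` with respect to the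
dot product `⟨x,y⟩ = ∑ e, x e * y e`. -/
def perpSub {S : Type*} [Fintype S] (V : Submodule ℝ (S → ℝ)) : Submodule ℝ (S → ℝ) where
  carrier := {y | ∀ x ∈ V, ∑ e, x e * y e = 0}
  zero_mem' := by intro x _; simp
  add_mem' := by
    intro a b ha hb x hx
    simp only [Set.mem_setOf_eq] at ha hb
    simp [Pi.add_apply, mul_add, Finset.sum_add_distrib, ha x hx, hb x hx]
  smul_mem' := by
    intro c a ha x hx
    simp only [Set.mem_setOf_eq] at ha
    simp [Pi.smul_apply, smul_eq_mul, mul_left_comm, ← Finset.mul_sum, ha x hx]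

/-- Separation: if `w ∉ U` there is a vector orthogonal to `U` but not to `w`. -/
lemma exists_orth {S : Type*} [Fintype S] (U : Submodule ℝ (S → ℝ)) (w : S → ℝ)
    (hw : w ∉ U) :
    ∃ y : S → ℝ, (∀ u ∈ U, ∑ e, u e * y e = 0) ∧ ∑ e, w e * y e ≠ 0 := by
  let L : EuclideanSpace ℝ S ≃ₗ[ℝ] (S → ℝ) := WithLp.linearEquiv 2 ℝ (S → ℝ)
  let U' : Submodule ℝ (EuclideanSpace ℝ S) := U.comap (L : EuclideanSpace ℝ S →ₗ[ℝ] (S → ℝ))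
  obtain ⟨a, ha, b, hb, hab⟩ := U'.exists_add_mem_mem_orthogonal (L.symm w)
  have hinner : ∀ (p q : EuclideanSpace ℝ S), (inner ℝ p q : ℝ) = ∑ e, L p e * L q e := by
    intro p q
    simp [PiLp.inner_apply, RCLike.inner_apply, L, WithLp.linearEquiv, mul_comm]
  have hbne : b ≠ 0 := by
    intro h
    apply hw
    have heq : L.symm w = a := by rw [hab, h, add_zero]
    have ha' : L a ∈ U := ha
    rw [← heq, LinearEquiv.apply_symm_apply] at ha'
    exact ha'
  refine ⟨L b, ?_, ?_⟩
  · intro u hu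
    have : (L.symm u) ∈ U' := by simpa [U', Submodule.mem_comap] using hu
    have := (Submodule.mem_orthogonal U' b).1 hb _ this
    rw [hinner] at this
    simpa using this
  · have h1 : (inner ℝ (L.symm w) b : ℝ) = inner ℝ b b := by
      rw [hab, inner_add_left]
      rw [(Submodule.mem_orthogonal U' b).1 hb _ ha, zero_add]
    have h2 : (inner ℝ b b : ℝ) ≠ 0 := inner_self_ne_zero.2 hbne
    rw [hinner] at h1
    simp only [LinearEquiv.apply_symm_apply] at h1
    rw [h1]
    exact h2

/-- Vectors vanishing on the support of `x`. -/
def vanishOn {S : Type*} (x : S → ℝ) : Submodule ℝ (S → ℝ) where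
  carrier := {z | ∀ g, x g ≠ 0 → z g = 0}
  zero_mem' := by intro g _; rfl
  add_mem' := by intro a b ha hb g hg; simp [Pi.add_apply, ha g hg, hb g hg]
  smul_mem' := by intro c a ha g hg; simp [Pi.smul_apply, ha g hg]

/-- A vector of `V^⊥` supported inside the support of a minimal-support vector `x`
is a multiple of `x`. -/
lemma prop_of_supp {S : Type*} [Fintype S] (V : Submodule ℝ (S → ℝ)) (x : S → ℝ)
    (hx : x ∈ perpSub V) (hmin : HasMinimalSupport (perpSub V) x)
    (y : S → ℝ) (hy : y ∈ perpSub V) (hs : ∀ g, x g = 0 → y g = 0) :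
    ∃ l : ℝ, y = l • x := by
  by_cases h0 : y = 0
  · exact ⟨0, by simp [h0]⟩
  obtain ⟨e₁, he₁⟩ : ∃ e, y e ≠ 0 := by
    by_contra h; push_neg at h; exact h0 (funext fun e => h e)
  have hx₁ : x e₁ ≠ 0 := fun h => he₁ (hs _ h)
  refine ⟨y e₁ / x e₁, ?_⟩
  set z := y - (y e₁ / x e₁) • x with hzdef
  have hzV : z ∈ perpSub V := Submodule.sub_mem _ hy (Submodule.smul_mem _ _ hx)
  have hze : z e₁ = 0 := by
    simp only [hzdef, Pi.sub_apply, Pi.smul_apply, smul_eq_mul]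
    field_simp
    ring
  have hz0 : z = 0 := by
    by_contra hne
    apply hmin.2 z hzV hne
    constructor
    · intro g hg
      simp only [suppOf, Set.mem_setOf_eq] at hg ⊢
      intro hxg
      apply hg
      simp [hzdef, hs g hxg, hxg]
    · intro hrev
      exact (hrev (show e₁ ∈ suppOf x from hx₁)) hze
  have := sub_eq_zero.1 hz0
  exact this

/-- Existence of a "path" vector in `V` through two support elements of `x`. -/
lemma exists_path {S : Type*} [Fintype S] (V : Submodule ℝ (S → ℝ)) (x : S → ℝ)
    (hx : x ∈ perpSub V) (hmin : HasMinimalSupport (perpSub V) x)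
    (e f : S) (he : x e ≠ 0) (hf : x f ≠ 0) (hef : e ≠ f) :
    ∃ v ∈ V, v e = x f ∧ (∀ g, x g ≠ 0 → g ≠ e → g ≠ f → v g = 0) := by
  classical
  set w : S → ℝ := Pi.single e (x f) - Pi.single f (x e) with hwdef
  have hw : w ∈ V ⊔ vanishOn x := by
    by_contra hnot
    obtain ⟨y, hyU, hyw⟩ := exists_orth _ w hnot
    have hyV : y ∈ perpSub V := fun v hv => hyU v (Submodule.mem_sup_left hv)
    have hsupp : ∀ g, x g = 0 → y g = 0 := by
      intro g hg
      have hmem : (Pi.single g 1 : S → ℝ) ∈ V ⊔ vanishOn x := by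
        apply Submodule.mem_sup_right
        intro g' hg'
        have : g' ≠ g := fun h => by subst h; exact hg' hg
        exact Pi.single_eq_of_ne this 1
      have hsum := hyU _ hmem
      simpa [Pi.single_apply, ite_mul, Finset.sum_ite_eq'] using hsum
    obtain ⟨l, hl⟩ := prop_of_supp V x hx hmin y hyV hsupp
    apply hyw
    subst hl
    have : ∑ g, w g * (l • x) g = l * ∑ g, w g * x g := by
      simp only [Pi.smul_apply, smul_eq_mul]
      rw [Finset.mul_sum]
      congr 1; funext g; ring
    rw [this]
    have h1 : ∀ (a : S) (c : ℝ), ∑ g, (Pi.single a c : S → ℝ) g * x g = c * x a := by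
      intro a c
      simp [Pi.single_apply, ite_mul, Finset.sum_ite_eq']
    have hwx : ∑ g, w g * x g = 0 := by
      simp only [hwdef, Pi.sub_apply, sub_mul, Finset.sum_sub_distrib, h1]
      ring
    rw [hwx, mul_zero]
  obtain ⟨v, hvV, z, hz, hvz⟩ := Submodule.mem_sup.1 hw
  have hvg : ∀ g, x g ≠ 0 → v g = w g := by
    intro g hg
    have : z g = 0 := hz g hg
    have := congrFun hvz g
    simp only [Pi.add_apply] at this
    rw [show z g = 0 from hz g hg, add_zero] at this
    exact this
  refine ⟨v, hvV, ?_, ?_⟩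
  · rw [hvg e he]
    simp [hwdef, Pi.single_eq_same, Pi.single_eq_of_ne (Ne.symm hef), Pi.single_eq_of_ne hef]
  · intro g hg hge hgf
    rw [hvg g hg]
    simp [hwdef, Pi.single_eq_of_ne hge, Pi.single_eq_of_ne hgf]

/-- The key ratio lemma: any two support entries of a minimal-support vector of
`V^⊥` agree up to sign. -/
lemma entries_eq_up_to_sign {S : Type*} [Fintype S] (V : Submodule ℝ (S → ℝ))
    (hV : IsRegularSubspace V) (x : S → ℝ)
    (hx : x ∈ perpSub V) (hmin : HasMinimalSupport (perpSub V) x)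
    (e f : S) (he : x e ≠ 0) (hf : x f ≠ 0) (hef : e ≠ f) :
    x e = x f ∨ x e = - x f := by
  classical
  set P : (S → ℝ) → Prop := fun v => v ∈ V ∧ v e ≠ 0 ∧
    ∀ g, x g ≠ 0 → g ≠ e → g ≠ f → v g = 0 with hPdef
  have hPne : ∃ v, P v := by
    obtain ⟨v, hvV, hve, hvg⟩ := exists_path V x hx hmin e f he hf hef
    exact ⟨v, hvV, by rw [hve]; exact hf, hvg⟩
  set n : (S → ℝ) → ℕ := fun v => (Finset.univ.filter fun g => v g ≠ 0).card with hndef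
  obtain ⟨v, hPv, hvmin⟩ : ∃ v, P v ∧ ∀ u, P u → n v ≤ n u := by
    have hTne : {k | ∃ v, P v ∧ n v = k}.Nonempty := by
      obtain ⟨v, hv⟩ := hPne
      exact ⟨n v, v, hv, rfl⟩
    obtain ⟨v, hv, hnv⟩ := Nat.sInf_mem hTne
    exact ⟨v, hv, fun u hu => hnv ▸ Nat.sInf_le ⟨u, hu, rfl⟩⟩
  obtain ⟨hvV, hve, hvvan⟩ := hPv
  have hvne : v ≠ 0 := fun h => hve (by rw [h]; rfl)
  -- v has minimal support in V
  have hvmin' : HasMinimalSupport V v := by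
    refine ⟨hvne, ?_⟩
    intro y hyV hyne hss
    have hsub : ∀ g, v g = 0 → y g = 0 := by
      intro g hg
      by_contra hyg
      exact hss.1 hyg hg
    have hyvan : ∀ g, x g ≠ 0 → g ≠ e → g ≠ f → y g = 0 :=
      fun g hg hge hgf => hsub g (hvvan g hg hge hgf)
    by_cases hye : y e = 0
    · -- derive y f = 0, then shrink v by a multiple of y
      have hyf : y f = 0 := by
        have horth := hx y hyV
        have hsum : ∑ g, y g * x g = y f * x f := by
          rw [← Finset.sum_subset (Finset.subset_univ {f})]
          · simp
          · intro g _ hg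
            simp only [Finset.mem_singleton] at hg
            by_cases hxg : x g = 0
            · rw [hxg, mul_zero]
            · by_cases hge : g = e
              · subst hge; rw [hye, zero_mul]
              · rw [hyvan g hxg hge hg, zero_mul]
        rw [hsum] at horth
        exact (mul_eq_zero.1 horth).resolve_right hf
      obtain ⟨g₀, hg₀⟩ : ∃ g, y g ≠ 0 := by
        by_contra h; push_neg at h; exact hyne (funext fun g => h g)
      have hvg₀ : v g₀ ≠ 0 := fun h => hg₀ (hsub g₀ h)
      set v' := v - (v g₀ / y g₀) • y with hv'def
      have hP' : P v' := by
        refine ⟨Submodule.sub_mem _ hvV (Submodule.smul_mem _ _ hyV), ?_, ?_⟩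
        · simp only [hv'def, Pi.sub_apply, Pi.smul_apply, smul_eq_mul, hye, mul_zero,
            sub_zero]
          exact hve
        · intro g hg hge hgf
          simp [hv'def, hvvan g hg hge hgf, hyvan g hg hge hgf]
      have hlt : n v' < n v := by
        have hsub' : (Finset.univ.filter fun g => v' g ≠ 0) ⊆
            (Finset.univ.filter fun g => v g ≠ 0).erase g₀ := by
          intro g hg
          simp only [Finset.mem_filter, Finset.mem_univ, true_and] at hg
          rw [Finset.mem_erase]
          constructor
          · intro h
            subst h
            apply hg
            simp only [hv'def, Pi.sub_apply, Pi.smul_apply, smul_eq_mul]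
            field_simp
            ring
          · simp only [Finset.mem_filter, Finset.mem_univ, true_and]
            intro h
            apply hg
            simp [hv'def, h, hsub g h]
        calc n v' ≤ _ := Finset.card_le_card hsub'
          _ < n v := Finset.card_erase_lt_of_mem (by
              simp only [Finset.mem_filter, Finset.mem_univ, true_and]; exact hvg₀)
      exact absurd (hvmin v' hP') (not_le.2 hlt)
    · -- y itself satisfies P with strictly smaller support
      have hP' : P y := ⟨hyV, hye, hyvan⟩
      have hlt : n y < n v := by
        obtain ⟨g₁, hg₁v, hg₁y⟩ := Set.exists_of_ssubset hss
        apply Finset.card_lt_card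
        rw [Finset.ssubset_def]
        constructor
        · intro g hg
          simp only [Finset.mem_filter, Finset.mem_univ, true_and] at hg ⊢
          exact hss.1 hg
        · intro hrev
          have := hrev (by
            simp only [Finset.mem_filter, Finset.mem_univ, true_and]
            exact hg₁v)
          simp only [Finset.mem_filter, Finset.mem_univ, true_and] at this
          exact hg₁y this
      exact absurd (hvmin y hP') (not_le.2 hlt)
  obtain ⟨c, u, huval, hvcu⟩ := hV v hvV hvmin'
  have hc : c ≠ 0 := by
    intro h
    apply hvne
    rw [hvcu, h, zero_smul]
  -- orthogonality: v e * x e + v f * x f = 0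
  have horth : v e * x e + v f * x f = 0 := by
    have h0 := hx v hvV
    have hsum : ∑ g, v g * x g = v e * x e + v f * x f := by
      rw [← Finset.sum_subset (Finset.subset_univ {e, f})]
      · rw [Finset.sum_insert (by simpa using hef), Finset.sum_singleton]
      · intro g _ hg
        simp only [Finset.mem_insert, Finset.mem_singleton, not_or] at hg
        by_cases hxg : x g = 0
        · rw [hxg, mul_zero]
        · rw [hvvan g hxg hg.1 hg.2, zero_mul]
    rw [hsum] at h0
    exact h0
  have hvf : v f ≠ 0 := by
    intro h
    rw [h, zero_mul, add_zero] at horth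
    exact he ((mul_eq_zero.1 horth).resolve_left hve)
  have hue : u e = 1 ∨ u e = -1 := by
    rcases huval e with h | h | h
    · exfalso; apply hve; rw [hvcu]; simp [h]
    · exact Or.inl h
    · exact Or.inr h
  have huf : u f = 1 ∨ u f = -1 := by
    rcases huval f with h | h | h
    · exfalso; apply hvf; rw [hvcu]; simp [h]
    · exact Or.inl h
    · exact Or.inr h
  have hve' : v e = c * u e := by rw [hvcu]; rfl
  have hvf' : v f = c * u f := by rw [hvcu]; rfl
  rw [hve', hvf'] at horth
  have hkey : u e * x e + u f * x f = 0 := by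
    have : c * (u e * x e + u f * x f) = 0 := by ring_nf; ring_nf at horth; linarith
    exact (mul_eq_zero.1 this).resolve_left hc
  rcases hue with h1 | h1 <;> rcases huf with h2 | h2 <;>
    rw [h1, h2] at hkey <;> [right; left; left; right] <;> linarith

/-- If `V ⊆ ℝ^S` is regular (completely unimodular), then so is its orthogonal
complement `V^⊥`. -/
theorem perp_isRegular_of_isRegular
    {S : Type*} [Fintype S] (V : Submodule ℝ (S → ℝ)) (hV : IsRegularSubspace V) :
    IsRegularSubspace (perpSub V) := by
  intro x hx hmin
  obtain ⟨e₀, he₀⟩ : ∃ e, x e ≠ 0 := by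
    by_contra h; push_neg at h; exact hmin.1 (funext fun e => h e)
  refine ⟨x e₀, fun g => x g / x e₀, ?_, ?_⟩
  · intro g
    by_cases hg : x g = 0
    · left; show x g / x e₀ = 0; rw [hg, zero_div]
    · by_cases hge : g = e₀
      · right; left; show x g / x e₀ = 1; rw [hge, div_self he₀]
      · rcases entries_eq_up_to_sign V hV x hx hmin g e₀ hg he₀ hge with h | h
        · right; left; show x g / x e₀ = 1; rw [h, div_self he₀]
        · right; right; show x g / x e₀ = -1; rw [h, neg_div, div_self he₀]
  · funext g
    simp only [Pi.smul_apply, smul_eq_mul]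
    rw [mul_comm, div_mul_cancel₀ _ he₀]
end

section
/- Let V be a subspace of ℝ^S for a finite set S, and let x ∈ V have minimal support in V. Then there exists a base B of V such that B ∩ supp(x) consists of exactly one element. -/
open Set Submodule Function

-- auxiliary: every subspace of ℝ^S has a base
theorem exists_isBase' {S : Type*} [Fintype S] (W : Submodule ℝ (S → ℝ)) :
    ∃ B : Set S, Function.Bijective (fun (x : W) => fun (e : B) => (x : S → ℝ) e) := by
  classical
  obtain ⟨b, hbW, hspanb, hb⟩ := exists_linearIndependent ℝ (W : Set (S → ℝ))
  rw [Submodule.span_coe_eq_restrictScalars] at hspanb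
  have hspanb' : Submodule.span ℝ b = W := hspanb
  replace hb : LinearIndepOn ℝ id b := hb
  set t : Set (S → ℝ) := b ∪ Set.range (fun i : S => Pi.single i (1:ℝ)) with ht
  have hst : b ⊆ t := Set.subset_union_left
  have hspant : Submodule.span ℝ t = ⊤ := by
    apply top_unique
    rw [← (Pi.basisFun ℝ S).span_eq]
    apply span_mono
    intro v hv
    obtain ⟨i, rfl⟩ := Set.mem_range.mp hv
    exact Or.inr ⟨i, by simp [Pi.basisFun_apply]⟩
  set u := hb.extend hst with hu
  have hbu : b ⊆ u := hb.subset_extend hst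
  have hut : u ⊆ t := hb.extend_subset hst
  have hspanu : Submodule.span ℝ u = ⊤ := by
    rw [hb.span_extend_eq_span hst, hspant]
  have hindu : LinearIndependent ℝ ((↑) : u → (S → ℝ)) := hb.linearIndepOn_extend hst
  set C : Set S := {i | Pi.single i (1:ℝ) ∈ u \ b} with hC
  set B : Set S := Cᶜ with hBdef
  -- elements of u \ b vanish on B
  have hK : Submodule.span ℝ (u \ b) ≤
      { carrier := {y : S → ℝ | ∀ i ∈ B, y i = 0},
        add_mem' := fun hy hz i hi => by simp [hy i hi, hz i hi],
        zero_mem' := fun i _ => rfl,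
        smul_mem' := fun c y hy i hi => by simp [hy i hi] } := by
    apply span_le.2
    intro v hv i hi
    have hv' : v ∈ t := hut hv.1
    rcases hv' with h | h
    · exact absurd h hv.2
    · obtain ⟨j, rfl⟩ := h
      have hjC : j ∈ C := hv
      have : i ≠ j := fun h => hi (h ▸ hjC)
      simp [Pi.single_apply, this.symm]
  -- disjointness of spans
  have hdisj : Disjoint (Submodule.span ℝ b) (Submodule.span ℝ (u \ b)) := by
    have := hindu.disjoint_span_image (s := {z : u | (z : S → ℝ) ∈ b})
      (t := {z : u | (z : S → ℝ) ∈ u \ b}) (by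
        rw [Set.disjoint_left]; intro z hz hz'
        exact hz'.2 hz)
    have h1 : (↑) '' {z : u | (z : S → ℝ) ∈ b} = b := by
      ext v; constructor
      · rintro ⟨z, hz, rfl⟩; exact hz
      · intro hv; exact ⟨⟨v, hbu hv⟩, hv, rfl⟩
    have h2 : (↑) '' {z : u | (z : S → ℝ) ∈ u \ b} = u \ b := by
      ext v; constructor
      · rintro ⟨z, hz, rfl⟩; exact hz
      · intro hv; exact ⟨⟨v, hv.1⟩, hv, rfl⟩
    rwa [h1, h2] at this
  refine ⟨B, ?_, ?_⟩
  · -- injective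
    intro y z h
    have hyz : (y : S → ℝ) - z ∈ W := sub_mem y.2 z.2
    have hres : ∀ i ∈ B, ((y : S → ℝ) - z) i = 0 := by
      intro i hi
      have := congrFun h ⟨i, hi⟩
      simpa [sub_eq_zero] using this
    -- (y - z) is supported on C, hence in span (single '' C) ≤ span (u \ b)
    have hmem : (y : S → ℝ) - z ∈ Submodule.span ℝ (u \ b) := by
      have : (y : S → ℝ) - z = ∑ i : S, (((y : S → ℝ) - z) i) • (Pi.single i (1:ℝ) : S → ℝ) := by
        funext j
        simp [Finset.sum_apply, Pi.single_apply]
      rw [this]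
      apply Submodule.sum_mem
      intro i _
      by_cases hiC : i ∈ C
      · exact Submodule.smul_mem _ _ (Submodule.subset_span hiC)
      · rw [hres i hiC]
        simp
    have : (y : S → ℝ) - z = 0 := by
      have := hdisj.le_bot ⟨hspanb' ▸ hyz, hmem⟩
      simpa using this
    exact Subtype.ext (sub_eq_zero.mp this)
  · -- surjective
    intro g
    set y : S → ℝ := fun i => if h : i ∈ B then g ⟨i, h⟩ else 0 with hy
    have hyT : y ∈ Submodule.span ℝ b ⊔ Submodule.span ℝ (u \ b) := by
      rw [← Submodule.span_union, Set.union_diff_self, Set.union_eq_self_of_subset_left hbu,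
        hspanu]
      trivial
    obtain ⟨w, hw, k, hk, hwk⟩ := Submodule.mem_sup.mp hyT
    refine ⟨⟨w, hspanb' ▸ hw⟩, ?_⟩
    funext i
    have hk0 : k i.1 = 0 := hK hk i.1 i.2
    have : w i.1 + k i.1 = y i.1 := congrFun hwk i.1
    simp only [hk0, add_zero] at this
    simp [this, hy, i.2]

/-- zero out the coordinates in the support of `x` -/
noncomputable def maskMap {S : Type*} (x : S → ℝ) : (S → ℝ) →ₗ[ℝ] (S → ℝ) where
  toFun y := fun s => if x s = 0 then y s else 0
  map_add' y z := by funext s; by_cases h : x s = 0 <;> simp [h]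
  map_smul' c y := by funext s; by_cases h : x s = 0 <;> simp [h]

/-- If `x ∈ V` has minimal support in `V`, then there is a base `B` of `V`
that intersects the support of `x` in exactly one element. -/
theorem exists_base_inter_support_singleton
    {S : Type*} [Fintype S] (V : Submodule ℝ (S → ℝ)) (x : S → ℝ)
    (hx : x ∈ V) (hmin : HasMinimalSupport V x) :
    ∃ B : Set S, IsBase V B ∧ ∃ e : S, B ∩ suppOf x = {e} := by
  classical
  obtain ⟨hx0, hminsup⟩ := hmin
  obtain ⟨e, he⟩ : ∃ e, x e ≠ 0 := Function.ne_iff.mp hx0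
  set P := maskMap x with hP
  set W := V.map P with hW
  obtain ⟨B₀, hB₀⟩ := exists_isBase' W
  -- B₀ avoids supp x
  have hB₀x : ∀ b ∈ B₀, x b = 0 := by
    intro b hb
    by_contra hxb
    obtain ⟨w, hw⟩ := hB₀.2 (fun c => if c = (⟨b, hb⟩ : B₀) then 1 else 0)
    have h1 : (w : S → ℝ) b = 1 := by
      have := congrFun hw ⟨b, hb⟩
      simpa using this
    obtain ⟨y, -, hy⟩ := w.2
    have : (w : S → ℝ) b = 0 := by
      rw [← hy]; simp [hP, maskMap, hxb]
    rw [this] at h1; exact zero_ne_one h1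
  have heB₀ : e ∉ B₀ := fun h => he (hB₀x e h)
  refine ⟨insert e B₀, ⟨?_, ?_⟩, e, ?_⟩
  · -- injective
    intro y z h
    set d : S → ℝ := (y : S → ℝ) - z with hd
    have hdV : d ∈ V := sub_mem y.2 z.2
    have hdB : ∀ i ∈ insert e B₀, d i = 0 := by
      intro i hi
      have := congrFun h ⟨i, hi⟩
      simpa [hd, sub_eq_zero] using this
    have hPd : P d ∈ W := Submodule.mem_map_of_mem hdV
    have hPd0 : P d = 0 := by
      have h0 : (fun (c : B₀) => ((⟨P d, hPd⟩ : W) : S → ℝ) c) =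
          (fun (c : B₀) => ((0 : W) : S → ℝ) c) := by
        funext c
        have hxc := hB₀x c c.2
        have := hdB c (Set.mem_insert_of_mem _ c.2)
        simp [hP, maskMap, hxc, this]
      have h1 := hB₀.1 (show (fun (x : W) (c : B₀) => (x : S → ℝ) c) ⟨P d, hPd⟩ =
          (fun (x : W) (c : B₀) => (x : S → ℝ) c) 0 from h0)
      exact Subtype.ext_iff.mp h1
    -- so supp d ⊆ supp x
    have hsupp : suppOf d ⊆ suppOf x := by
      intro s hs
      by_contra hxs
      have hxs0 : x s = 0 := not_not.mp hxs
      have : (P d) s = d s := by simp [hP, maskMap, hxs0]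
      rw [hPd0] at this
      exact hs this.symm
    have hde : d e = 0 := hdB e (Set.mem_insert _ _)
    by_contra hne
    have hd0 : d ≠ 0 := fun h => hne (Subtype.ext (sub_eq_zero.mp (hd ▸ h)))
    exact hminsup d hdV hd0 ⟨hsupp, fun hsub => (hsub he) hde⟩
  · -- surjective
    intro g
    obtain ⟨w, hwg⟩ := hB₀.2 (fun b : B₀ => g ⟨b.1, Set.mem_insert_of_mem _ b.2⟩)
    obtain ⟨y, hyV, hy⟩ := w.2
    set c : ℝ := (g ⟨e, Set.mem_insert _ _⟩ - y e) / (x e) with hc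
    refine ⟨⟨y + c • x, add_mem hyV (Submodule.smul_mem _ _ hx)⟩, ?_⟩
    funext i
    obtain ⟨s, hs⟩ := i
    rcases hs with rfl | hsB
    · show y s + c * x s = _
      rw [hc]
      field_simp
      ring
    · show y s + c * x s = _
      have hxs := hB₀x s hsB
      have hws : (w : S → ℝ) s = y s := by rw [← hy]; simp [hP, maskMap, hxs]
      have := congrFun hwg ⟨s, hsB⟩
      simp only at this
      rw [hxs, mul_zero, add_zero, ← hws, this]
  · ext s
    simp only [Set.mem_inter_iff, Set.mem_insert_iff, Set.mem_singleton_iff]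
    constructor
    · rintro ⟨rfl | hsB, hxs⟩
      · rfl
      · exact absurd (hB₀x s hsB) hxs
    · rintro rfl
      exact ⟨Or.inl rfl, he⟩
end

section
/- Let V be a subspace of ℝ^S for a finite set S and let B ⊆ S. Then B is a base of V if and only if S \ B is a base of V^⊥. (This expresses that the matroid associated with V^⊥ is the dual of the matroid associated with V: complements of bases of one are bases of the other.) -/
section Aux
set_option linter.unusedSectionVars false
variable {S : Type*} [Fintype S]

def toE (V : Submodule ℝ (S → ℝ)) : Submodule ℝ (EuclideanSpace ℝ S) :=
  V.comap (WithLp.linearEquiv 2 ℝ (S → ℝ)).toLinearMap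

lemma mem_toE {V : Submodule ℝ (S → ℝ)} {x : EuclideanSpace ℝ S} : x ∈ toE V ↔ x.ofLp ∈ V := Iff.rfl

lemma toE_perpSub (V : Submodule ℝ (S → ℝ)) : toE (perpSub V) = (toE V)ᗮ := by
  ext y
  rw [mem_toE, Submodule.mem_orthogonal]
  constructor
  · intro h x hx
    have := h x.ofLp hx
    simpa [PiLp.inner_apply, RCLike.inner_apply, mul_comm] using this
  · intro h x hx
    have := h (WithLp.toLp 2 x) hx
    simpa [PiLp.inner_apply, RCLike.inner_apply, mul_comm] using this

def coordSub (A : Set S) : Submodule ℝ (EuclideanSpace ℝ S) where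
  carrier := {x | ∀ e ∉ A, x e = 0}
  zero_mem' := by intro e _; rfl
  add_mem' := by intro a b ha hb e he; show a e + b e = 0; rw [ha e he, hb e he, add_zero]
  smul_mem' := by intro c a ha e he; show c * a e = 0; rw [ha e he, mul_zero]

lemma mem_coordSub {A : Set S} {x : EuclideanSpace ℝ S} : x ∈ coordSub A ↔ ∀ e ∉ A, x e = 0 := Iff.rfl

lemma orth_coordSub (A : Set S) : (coordSub A)ᗮ = coordSub Aᶜ := by
  classical
  ext y
  rw [Submodule.mem_orthogonal, mem_coordSub]
  constructor
  · intro h e he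
    rw [Set.notMem_compl_iff] at he
    have := h (EuclideanSpace.single e 1) (by
      intro f hf
      rw [EuclideanSpace.single_apply, if_neg]
      rintro rfl; exact hf he)
    simpa [EuclideanSpace.inner_single_left] using this
  · intro h x hx
    rw [PiLp.inner_apply]
    apply Finset.sum_eq_zero
    intro e _
    by_cases he : e ∈ A
    · rw [h e (by simpa using he)]; simp
    · rw [hx e he]; simp

lemma isBase_iff (V : Submodule ℝ (S → ℝ)) (B : Set S) :
    IsBase V B ↔ (toE V ⊓ coordSub Bᶜ = ⊥ ∧ toE V ⊔ coordSub Bᶜ = ⊤) := by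
  classical
  constructor
  · rintro ⟨hinj, hsurj⟩
    constructor
    · rw [eq_bot_iff]
      rintro z ⟨hzV, hzC⟩
      have hzC' : ∀ e ∉ Bᶜ, z e = 0 := hzC
      have hzV' : z.ofLp ∈ V := hzV
      have : (⟨z.ofLp, hzV'⟩ : V) = (0 : V) := by
        apply hinj
        funext e
        exact hzC' e (by simp [e.2])
      rw [Submodule.mem_bot]; exact WithLp.ofLp_injective (p := 2) (congrArg Subtype.val this)
    · rw [eq_top_iff]
      intro z _
      obtain ⟨v, hv⟩ := hsurj (fun e : B => z e)
      refine Submodule.mem_sup.2 ⟨WithLp.toLp 2 (v : S → ℝ), v.2,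
        WithLp.toLp 2 (fun e => z e - (v : S → ℝ) e), ?_,
          WithLp.ofLp_injective (p := 2) <| funext fun e => by simp⟩
      intro e he
      rw [Set.notMem_compl_iff] at he
      have h2 : (v : S → ℝ) e = z e := congrFun hv ⟨e, he⟩
      show z e - (v : S → ℝ) e = 0
      rw [h2]; ring
  · rintro ⟨hbot, htop⟩
    constructor
    · intro x y hxy
      have hC : WithLp.toLp 2 ((x : S → ℝ) - y) ∈ coordSub Bᶜ := by
        intro e he
        rw [Set.notMem_compl_iff] at he
        have h2 : (x : S → ℝ) e = (y : S → ℝ) e := congrFun hxy ⟨e, he⟩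
        show (x : S → ℝ) e - (y : S → ℝ) e = 0
        rw [h2]; ring
      have hmem : WithLp.toLp 2 ((x : S → ℝ) - y) ∈ toE V ⊓ coordSub Bᶜ := ⟨sub_mem x.2 y.2, hC⟩
      rw [hbot, Submodule.mem_bot] at hmem
      have := congrArg WithLp.ofLp hmem
      simp only [WithLp.ofLp_toLp, WithLp.ofLp_zero] at this
      exact Subtype.ext (sub_eq_zero.1 this)
    · intro y
      set z : S → ℝ := fun e => if h : e ∈ B then y ⟨e, h⟩ else 0 with hz
      have hzm : WithLp.toLp 2 z ∈ toE V ⊔ coordSub Bᶜ := htop.symm ▸ Submodule.mem_top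
      obtain ⟨v, hv, w, hw, hvw⟩ := Submodule.mem_sup.1 hzm
      have hv' : v.ofLp ∈ V := hv
      refine ⟨⟨v.ofLp, hv'⟩, ?_⟩
      funext e
      have hwe : w (e : S) = 0 := hw (e : S) (by simp [e.2])
      have h2 : v (e : S) + w (e : S) = z (e : S) := congrFun (congrArg WithLp.ofLp hvw) (e : S)
      show v (e : S) = y e
      have hze : z (e : S) = y e := by simp [hz, e.2]
      calc v (e : S) = v (e : S) + w (e : S) := by rw [hwe, add_zero]
        _ = z (e : S) := h2
        _ = y e := hze

lemma lattice_orth {E : Type*} [NormedAddCommGroup E] [InnerProductSpace ℝ E]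
    [FiniteDimensional ℝ E] (U W : Submodule ℝ E) (h1 : U ⊓ W = ⊥) (h2 : U ⊔ W = ⊤) :
    Uᗮ ⊓ Wᗮ = ⊥ ∧ Uᗮ ⊔ Wᗮ = ⊤ := by
  constructor
  · rw [Submodule.inf_orthogonal, h2, Submodule.top_orthogonal_eq_bot]
  · rw [← Submodule.orthogonal_eq_bot_iff, ← Submodule.inf_orthogonal,
      Submodule.orthogonal_orthogonal, Submodule.orthogonal_orthogonal, h1]

end Aux

/-- `B` is a base of `V` iff its complement `S \ B` is a base of `V^⊥`:
the matroid of `V^⊥` is the dual of the matroid of `V`. -/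
theorem isBase_iff_compl_isBase_perp
    {S : Type*} [Fintype S] (V : Submodule ℝ (S → ℝ)) (B : Set S) :
    IsBase V B ↔ IsBase (perpSub V) Bᶜ := by
  rw [isBase_iff, isBase_iff, toE_perpSub, ← orth_coordSub Bᶜ]
  constructor
  · rintro ⟨h1, h2⟩
    exact lattice_orth _ _ h1 h2
  · rintro ⟨h1, h2⟩
    have := lattice_orth _ _ h1 h2
    rwa [Submodule.orthogonal_orthogonal, Submodule.orthogonal_orthogonal] at this
end
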